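/- Let A be a unital associative algebra over a field with char ≠ 2 such that A = K(A), its commutator ideal. Then the subalgebra of A generated by [A,A] is all of A. -/

import Mathlib

namespace AdjCommAux

variable {F A : Type*} [Field F] [Ring A] [Algebra F A]

/-- The set of commutators. -/
def S (A : Type*) [Ring A] : Set A := {x : A | ∃ a b : A, x = a * b - b * a}

/-- Commutators of commutators with arbitrary elements. -/
def T (A : Type*) [Ring A] : Set A := {x : A | ∃ s c : A, s ∈ S A ∧ x = s * c - c * s}

theorem L1 (F : Type*) {A : Type*} [Field F] [Ring A] [Algebra F A] {s : A}
    (hs : s ∈ S A) (z w : A) :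
    (s * z - z * s) * w ∈ NonUnitalAlgebra.adjoin F (S A) := by
  have key : (s * z - z * s) * w
      = ((s * w) * z - z * (s * w)) - s * (w * z - z * w) := by noncomm_ring
  rw [key]
  exact sub_mem (NonUnitalAlgebra.subset_adjoin F ⟨s * w, z, rfl⟩)
    (mul_mem (NonUnitalAlgebra.subset_adjoin F hs)
      (NonUnitalAlgebra.subset_adjoin F ⟨w, z, rfl⟩))

theorem L2 (F : Type*) {A : Type*} [Field F] [Ring A] [Algebra F A] {t : A}
    (ht : t ∈ T A) (a b : A) :
    a * t * b ∈ NonUnitalAlgebra.adjoin F (S A) := by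
  obtain ⟨s, c, hs, rfl⟩ := ht
  have hm : s * c - c * s ∈ S A := ⟨s, c, rfl⟩
  have key : a * (s * c - c * s) * b
      = (s * c - c * s) * (a * b)
        - ((s * c - c * s) * a - a * (s * c - c * s)) * b := by noncomm_ring
  rw [key]
  exact sub_mem (L1 F hs c (a * b)) (L1 F hm a b)

/-- every commutator squares into any two-sided ideal containing `T`. -/
theorem sq_mem (hchar : (2 : F) ≠ 0) (I : TwoSidedIdeal A) (hTI : T A ⊆ I)
    {s : A} (hs : s ∈ S A) : s * s ∈ I := by
  obtain ⟨x, y, rfl⟩ := hs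
  have hs' : x * y - y * x ∈ S A := ⟨x, y, rfl⟩
  have hd : x * (y * y) - (y * y) * x ∈ S A := ⟨x, y * y, rfl⟩
  have h1 : x * (x * (y * y) - (y * y) * x) - (x * (y * y) - (y * y) * x) * x ∈ I := by
    have h := I.neg_mem (hTI ⟨x * (y * y) - (y * y) * x, x, hd, rfl⟩)
    rwa [neg_sub] at h
  have h2 : x * (x * y - y * x) - (x * y - y * x) * x ∈ I := by
    have h := I.neg_mem (hTI ⟨x * y - y * x, x, hs', rfl⟩)
    rwa [neg_sub] at h
  have h3 : (x * y) * (x * y - y * x) - (x * y - y * x) * (x * y) ∈ I := by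
    have h := I.neg_mem (hTI ⟨x * y - y * x, x * y, hs', rfl⟩)
    rwa [neg_sub] at h
  have h4 : (x * y - y * x) * y - y * (x * y - y * x) ∈ I := hTI ⟨x * y - y * x, y, hs', rfl⟩
  have key : (x * y - y * x) * (x * y - y * x) + (x * y - y * x) * (x * y - y * x)
      = (x * (x * (y * y) - (y * y) * x) - (x * (y * y) - (y * y) * x) * x)
        - (x * (x * y - y * x) - (x * y - y * x) * x) * y
        - ((x * y) * (x * y - y * x) - (x * y - y * x) * (x * y))
        - ((x * y - y * x) * y - y * (x * y - y * x)) * x := by noncomm_ring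
  have h5 : (x * y - y * x) * (x * y - y * x) + (x * y - y * x) * (x * y - y * x) ∈ I := by
    rw [key]
    exact I.sub_mem (I.sub_mem (I.sub_mem h1 (I.mul_mem_right _ y h2)) h3)
      (I.mul_mem_right _ x h4)
  have h6 : (x * y - y * x) * (x * y - y * x)
      = algebraMap F A 2⁻¹
        * ((x * y - y * x) * (x * y - y * x) + (x * y - y * x) * (x * y - y * x)) := by
    rw [← two_mul, ← mul_assoc, ← map_ofNat (algebraMap F A) 2, ← map_mul,
      inv_mul_cancel₀ hchar, map_one, one_mul]
  rw [h6]
  exact I.mul_mem_left _ _ h5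

/-- The ideal of elements expressible as `s * c` modulo `I`. -/
def coeffIdeal (I : TwoSidedIdeal A) (hTI : T A ⊆ I) {s : A} (hs : s ∈ S A) :
    TwoSidedIdeal A :=
  TwoSidedIdeal.mk' {x : A | ∃ c : A, x - s * c ∈ I}
    ⟨0, by simpa using I.zero_mem⟩
    (fun {x y} hx hy => by
      obtain ⟨c1, hc1⟩ := hx; obtain ⟨c2, hc2⟩ := hy
      refine ⟨c1 + c2, ?_⟩
      have h := I.add_mem hc1 hc2
      have e : x - s * c1 + (y - s * c2) = x + y - s * (c1 + c2) := by noncomm_ring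
      rwa [e] at h)
    (fun {x} hx => by
      obtain ⟨c, hc⟩ := hx
      refine ⟨-c, ?_⟩
      have h := I.neg_mem hc
      have e : -(x - s * c) = -x - s * (-c) := by noncomm_ring
      rwa [e] at h)
    (fun {x y} hy => by
      obtain ⟨c, hc⟩ := hy
      refine ⟨x * c, ?_⟩
      have h1 := I.mul_mem_left x _ hc
      have h2 : (x * s - s * x) * c ∈ I := by
        refine I.mul_mem_right _ c ?_
        have h3 := I.neg_mem (hTI ⟨s, x, hs, rfl⟩)
        rwa [neg_sub] at h3
      have h := I.add_mem h1 h2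
      have e : x * (y - s * c) + (x * s - s * x) * c = x * y - s * (x * c) := by noncomm_ring
      rwa [e] at h)
    (fun {x y} hx => by
      obtain ⟨c, hc⟩ := hx
      refine ⟨c * y, ?_⟩
      have h := I.mul_mem_right _ y hc
      have e : (x - s * c) * y = x * y - s * (c * y) := by noncomm_ring
      rwa [e] at h)

theorem mem_coeffIdeal {I : TwoSidedIdeal A} {hTI : T A ⊆ I} {s : A} {hs : s ∈ S A} {z : A} :
    z ∈ coeffIdeal I hTI hs ↔ ∃ c : A, z - s * c ∈ I :=
  TwoSidedIdeal.mem_mk' _ _ _ _ _ _ _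

/-- Main induction: if `1` is congruent mod `I` to a sum of terms `s i * v i` with
`s i` commutators, then `1 ∈ I`, for any two-sided ideal `I` containing `T`. -/
theorem ind (hchar : (2 : F) ≠ 0) :
    ∀ (l : List (A × A)) (I : TwoSidedIdeal A), T A ⊆ I →
      (∀ p ∈ l, p.1 ∈ S A) →
      ((1 : A) - (l.map fun p => p.1 * p.2).sum) ∈ I → (1 : A) ∈ I := by
  intro l
  induction l with
  | nil => intro I hTI _ h; simpa using h
  | cons p t ih =>
    intro I hTI hmem h
    obtain ⟨s, v⟩ := p
    have hs : s ∈ S A := hmem (s, v) List.mem_cons_self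
    have hII' : ∀ z ∈ I, z ∈ TwoSidedIdeal.span (insert s (I : Set A)) :=
      fun z hz => TwoSidedIdeal.subset_span (Set.mem_insert_of_mem _ hz)
    have hsI' : s ∈ TwoSidedIdeal.span (insert s (I : Set A)) :=
      TwoSidedIdeal.subset_span (Set.mem_insert _ _)
    simp only [List.map_cons, List.sum_cons] at h
    have h' : (1 : A) - (t.map fun p => p.1 * p.2).sum
        ∈ TwoSidedIdeal.span (insert s (I : Set A)) := by
      have e : (1 : A) - (t.map fun p => p.1 * p.2).sum
          = (1 - (s * v + (t.map fun p => p.1 * p.2).sum)) + s * v := by abel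
      rw [e]
      exact (TwoSidedIdeal.span (insert s (I : Set A))).add_mem (hII' _ h)
        ((TwoSidedIdeal.span (insert s (I : Set A))).mul_mem_right s v hsI')
    have h1I' : (1 : A) ∈ TwoSidedIdeal.span (insert s (I : Set A)) :=
      ih (TwoSidedIdeal.span (insert s (I : Set A)))
        (fun z hz => hII' z (hTI hz))
        (fun q hq => hmem q (List.mem_cons_of_mem _ hq)) h'
    have hins : insert s (I : Set A) ⊆ (coeffIdeal I hTI hs : Set A) := by
      intro z hz
      rcases Set.mem_insert_iff.mp hz with rfl | hzI
      · exact mem_coeffIdeal.mpr ⟨1, by simpa using I.zero_mem⟩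
      · exact mem_coeffIdeal.mpr ⟨0, by simpa using hzI⟩
    obtain ⟨c, hc⟩ := mem_coeffIdeal.mp
      (TwoSidedIdeal.mem_span_iff.mp h1I' (coeffIdeal I hTI hs) hins)
    -- hc : 1 - s * c ∈ I
    have hss : s * s ∈ I := sq_mem hchar I hTI hs
    have hcs : c * s - s * c ∈ I := by
      have h3 := I.neg_mem (hTI ⟨s, c, hs, rfl⟩)
      rwa [neg_sub] at h3
    have hsc : s * c * (s * c) ∈ I := by
      have e : s * c * (s * c) = (s * s) * (c * c) + s * ((c * s - s * c) * c) := by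
        noncomm_ring
      rw [e]
      exact I.add_mem (I.mul_mem_right _ _ hss)
        (I.mul_mem_left _ _ (I.mul_mem_right _ c hcs))
    have e2 : (1 : A) = (1 - s * c) + (s * c) * (1 - s * c) + s * c * (s * c) := by
      noncomm_ring
    rw [e2]
    exact I.add_mem (I.add_mem hc (I.mul_mem_left _ _ hc)) hsc

theorem negsum (l : List (A × A)) :
    (l.map fun p => p.1 * -p.2).sum = -(l.map fun p => p.1 * p.2).sum := by
  induction l with
  | nil => simp
  | cons p t ih =>
    simp only [List.map_cons, List.sum_cons]
    rw [mul_neg, ih, neg_add]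

theorem rsum (b : A) (l : List (A × A)) :
    (l.map fun p => p.1 * p.2).sum * b = (l.map fun p => p.1 * (p.2 * b)).sum := by
  induction l with
  | nil => simp
  | cons p t ih => simp [add_mul, mul_assoc, ih]

theorem lsum (a : A) (l : List (A × A)) (h : ∀ p ∈ l, p.1 ∈ S A) :
    a * (l.map fun p => p.1 * p.2).sum - (l.map fun p => p.1 * (a * p.2)).sum
      ∈ TwoSidedIdeal.span (T A) := by
  induction l with
  | nil => simpa using (TwoSidedIdeal.span (T A)).zero_mem
  | cons p t ih =>
    have hp : p.1 ∈ S A := h p List.mem_cons_self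
    have iht := ih (fun q hq => h q (List.mem_cons_of_mem _ hq))
    simp only [List.map_cons, List.sum_cons]
    have e : a * (p.1 * p.2 + (t.map fun p => p.1 * p.2).sum)
        - (p.1 * (a * p.2) + (t.map fun p => p.1 * (a * p.2)).sum)
        = (a * p.1 - p.1 * a) * p.2
          + (a * (t.map fun p => p.1 * p.2).sum - (t.map fun p => p.1 * (a * p.2)).sum) := by
      noncomm_ring
    rw [e]
    refine (TwoSidedIdeal.span (T A)).add_mem ?_ iht
    refine (TwoSidedIdeal.span (T A)).mul_mem_right _ p.2 ?_
    have h3 := (TwoSidedIdeal.span (T A)).neg_mem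
      (TwoSidedIdeal.subset_span (⟨p.1, a, hp, rfl⟩ : (p.1 * a - a * p.1) ∈ T A))
    rwa [neg_sub] at h3

/-- The two-sided ideal of elements representable as sums of `commutator * element`
modulo `span T`. -/
def repIdeal (F A : Type*) [Field F] [Ring A] [Algebra F A] : TwoSidedIdeal A :=
  TwoSidedIdeal.mk'
    {z : A | ∃ l : List (A × A), (∀ p ∈ l, p.1 ∈ S A) ∧
      z - (l.map fun p => p.1 * p.2).sum ∈ TwoSidedIdeal.span (T A)}
    ⟨[], by simp, by simpa using (TwoSidedIdeal.span (T A)).zero_mem⟩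
    (fun {x y} hx hy => by
      obtain ⟨l1, hl1, hm1⟩ := hx; obtain ⟨l2, hl2, hm2⟩ := hy
      refine ⟨l1 ++ l2, ?_, ?_⟩
      · intro q hq
        rcases List.mem_append.mp hq with h | h
        · exact hl1 q h
        · exact hl2 q h
      · have h := (TwoSidedIdeal.span (T A)).add_mem hm1 hm2
        have e : x - (l1.map fun p => p.1 * p.2).sum + (y - (l2.map fun p => p.1 * p.2).sum)
            = x + y - ((l1.map fun p => p.1 * p.2).sum + (l2.map fun p => p.1 * p.2).sum) := by
          abel
        rw [e] at h
        simpa [List.map_append, List.sum_append] using h)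
    (fun {x} hx => by
      obtain ⟨l, hl, hm⟩ := hx
      refine ⟨l.map fun p => (p.1, -p.2), ?_, ?_⟩
      · intro q hq
        obtain ⟨r, hr, rfl⟩ := List.mem_map.mp hq
        exact hl r hr
      · have h := (TwoSidedIdeal.span (T A)).neg_mem hm
        have e : ((l.map fun p => (p.1, -p.2)).map fun p => p.1 * p.2)
            = l.map fun p => p.1 * -p.2 := by
          rw [List.map_map]; rfl
        rw [e, negsum, sub_neg_eq_add, ← sub_eq_neg_add]
        rwa [neg_sub] at h)
    (fun {x y} hy => by
      obtain ⟨l, hl, hm⟩ := hy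
      refine ⟨l.map fun p => (p.1, x * p.2), ?_, ?_⟩
      · intro q hq
        obtain ⟨r, hr, rfl⟩ := List.mem_map.mp hq
        exact hl r hr
      · have e : ((l.map fun p => (p.1, x * p.2)).map fun p => p.1 * p.2)
            = l.map fun p => p.1 * (x * p.2) := by
          rw [List.map_map]; rfl
        rw [e]
        have h1 := (TwoSidedIdeal.span (T A)).mul_mem_left x _ hm
        have h2 := lsum x l hl
        have h := (TwoSidedIdeal.span (T A)).add_mem h1 h2
        have e2 : x * (y - (l.map fun p => p.1 * p.2).sum)
            + (x * (l.map fun p => p.1 * p.2).sum - (l.map fun p => p.1 * (x * p.2)).sum)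
            = x * y - (l.map fun p => p.1 * (x * p.2)).sum := by noncomm_ring
        rwa [e2] at h)
    (fun {x y} hx => by
      obtain ⟨l, hl, hm⟩ := hx
      refine ⟨l.map fun p => (p.1, p.2 * y), ?_, ?_⟩
      · intro q hq
        obtain ⟨r, hr, rfl⟩ := List.mem_map.mp hq
        exact hl r hr
      · have e : ((l.map fun p => (p.1, p.2 * y)).map fun p => p.1 * p.2)
            = l.map fun p => p.1 * (p.2 * y) := by
          rw [List.map_map]; rfl
        rw [e, ← rsum]
        have h := (TwoSidedIdeal.span (T A)).mul_mem_right _ y hm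
        rwa [sub_mul] at h)

/-- The two-sided ideal of elements all of whose multiples lie in the subalgebra
generated by commutators. -/
def bIdeal (F A : Type*) [Field F] [Ring A] [Algebra F A] : TwoSidedIdeal A :=
  TwoSidedIdeal.mk'
    {x : A | ∀ a b : A, a * x * b ∈ NonUnitalAlgebra.adjoin F (S A)}
    (fun a b => by simpa using zero_mem (NonUnitalAlgebra.adjoin F (S A)))
    (fun {x y} hx hy a b => by
      have h := add_mem (hx a b) (hy a b)
      have e : a * x * b + a * y * b = a * (x + y) * b := by noncomm_ring
      rwa [e] at h)
    (fun {x} hx a b => by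
      have h := neg_mem (hx a b)
      have e : -(a * x * b) = a * (-x) * b := by noncomm_ring
      rwa [e] at h)
    (fun {x y} hy a b => by
      have h := hy (a * x) b
      have e : a * x * y * b = a * (x * y) * b := by noncomm_ring
      rwa [e] at h)
    (fun {x y} hx a b => by
      have h := hx a (y * b)
      have e : a * x * (y * b) = a * (x * y) * b := by noncomm_ring
      rwa [e] at h)

theorem mem_bIdeal {x : A} :
    x ∈ bIdeal F A ↔ ∀ a b : A, a * x * b ∈ NonUnitalAlgebra.adjoin F (S A) :=
  TwoSidedIdeal.mem_mk' _ _ _ _ _ _ _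

end AdjCommAux

open AdjCommAux in
theorem adjoin_commutators_eq_top_of_eq_commutator_ideal
    (F A : Type*) [Field F] [Ring A] [Algebra F A] (hchar : (2 : F) ≠ 0)
    (hK : TwoSidedIdeal.span {x : A | ∃ a b : A, x = a * b - b * a} = ⊤) :
    NonUnitalAlgebra.adjoin F {x : A | ∃ a b : A, x = a * b - b * a} = ⊤ := by
  have h1 : (1 : A) ∈ TwoSidedIdeal.span (S A) := by
    show (1 : A) ∈ TwoSidedIdeal.span {x : A | ∃ a b : A, x = a * b - b * a}
    rw [hK]; exact TwoSidedIdeal.mem_top A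
  have hSrep : S A ⊆ (repIdeal F A : Set A) := by
    intro s hs
    refine (TwoSidedIdeal.mem_mk' _ _ _ _ _ _ _).mpr ⟨[(s, 1)], ?_, ?_⟩
    · intro q hq
      simp only [List.mem_singleton] at hq
      subst hq; exact hs
    · simpa using (TwoSidedIdeal.span (T A)).zero_mem
  obtain ⟨l, hl, hmem⟩ := (TwoSidedIdeal.mem_mk' _ _ _ _ _ _ _).mp
    (TwoSidedIdeal.mem_span_iff.mp h1 (repIdeal F A) hSrep)
  have h1J : (1 : A) ∈ TwoSidedIdeal.span (T A) :=
    ind hchar l (TwoSidedIdeal.span (T A)) TwoSidedIdeal.subset_span hl hmem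
  have hall : ∀ x : A, x ∈ TwoSidedIdeal.span (T A) := fun x => by
    have h := (TwoSidedIdeal.span (T A)).mul_mem_left x 1 h1J
    rwa [mul_one] at h
  have hTB : T A ⊆ (bIdeal F A : Set A) := fun t ht =>
    mem_bIdeal.mpr (fun a b => L2 F ht a b)
  have hxB : ∀ x : A, x ∈ NonUnitalAlgebra.adjoin F (S A) := by
    intro x
    have h := mem_bIdeal.mp (TwoSidedIdeal.mem_span_iff.mp (hall x) (bIdeal F A) hTB) 1 1
    rwa [one_mul, mul_one] at h
  rw [eq_top_iff]
  intro x _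
  exact hxB x
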